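/- Let Z be an integrable random vector in ℝ^q with radial distribution and f : ℝ^d → ℝ convex with linear growth. Define the pre-order A ⪯ B on M_{d,q}(ℝ) by: B Bᵀ − A Aᵀ is positive semidefinite. Then for every x ∈ ℝ^d, A ⪯ B implies E[f(x + A Z)] ≤ E[f(x + B Z)]. -/

import Mathlib

set_option linter.unusedSectionVars false
set_option maxHeartbeats 1000000
set_option linter.unusedVariables false

open MeasureTheory Matrix

section MatrixAux

variable {m n : Type*} [Fintype m] [DecidableEq m] [Fintype n] [DecidableEq n]

private lemma star_triv (M : Matrix m n ℝ) : Mᴴ = Mᵀ :=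
  M.conjTranspose_eq_transpose_of_trivial

private lemma psd_quad {M : Matrix n n ℝ} (h : M.PosSemidef) (v : n → ℝ) :
    0 ≤ v ⬝ᵥ (M *ᵥ v) := by simpa using h.dotProduct_mulVec_nonneg v

private lemma psd_conj {X : Matrix n n ℝ} (hX : X.PosSemidef) (C : Matrix m n ℝ) :
    (C * X * Cᵀ).PosSemidef := by
  have := hX.mul_mul_conjTranspose_same C
  rwa [star_triv] at this

private lemma psd_tm (M : Matrix m n ℝ) : (Mᵀ * M).PosSemidef := by
  have := Matrix.posSemidef_conjTranspose_mul_self M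
  rwa [star_triv] at this

private lemma psd_mt (M : Matrix m n ℝ) : (M * Mᵀ).PosSemidef := by
  have := Matrix.posSemidef_self_mul_conjTranspose M
  rwa [star_triv] at this

private lemma dot_self_nonneg (v : n → ℝ) : 0 ≤ v ⬝ᵥ v :=
  Finset.sum_nonneg fun i _ => mul_self_nonneg _

private lemma dot_sq_le (u v : n → ℝ) : (u ⬝ᵥ v) ^ 2 ≤ (u ⬝ᵥ u) * (v ⬝ᵥ v) := by
  have h := Finset.sum_mul_sq_le_sq_mul_sq Finset.univ u v
  simpa only [dotProduct, ← pow_two] using h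

private lemma psd_flip {M : Matrix m n ℝ} (h : (1 - M * Mᵀ).PosSemidef) :
    (1 - Mᵀ * M).PosSemidef := by
  have key : ∀ w : m → ℝ, (Mᵀ *ᵥ w) ⬝ᵥ (Mᵀ *ᵥ w) ≤ w ⬝ᵥ w := by
    intro w
    have h1 := psd_quad h w
    have e : w ⬝ᵥ ((1 - M * Mᵀ) *ᵥ w) = w ⬝ᵥ w - (Mᵀ *ᵥ w) ⬝ᵥ (Mᵀ *ᵥ w) := by
      rw [sub_mulVec, one_mulVec, dotProduct_sub, ← mulVec_mulVec,
        dotProduct_mulVec, mulVec_transpose]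
    rw [e] at h1
    linarith
  refine Matrix.PosSemidef.of_dotProduct_mulVec_nonneg ?_ ?_
  · exact Matrix.isHermitian_one.sub (psd_tm M).isHermitian
  · intro v
    have e : star v ⬝ᵥ ((1 - Mᵀ * M) *ᵥ v) = v ⬝ᵥ v - (M *ᵥ v) ⬝ᵥ (M *ᵥ v) := by
      simp only [star_trivial]
      rw [sub_mulVec, one_mulVec, dotProduct_sub, ← mulVec_mulVec,
        dotProduct_mulVec, vecMul_transpose]
    rw [e]
    set u := M *ᵥ v with hu
    have ha : 0 ≤ u ⬝ᵥ u := dot_self_nonneg u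
    have hb : 0 ≤ v ⬝ᵥ v := dot_self_nonneg v
    have hcs : ((Mᵀ *ᵥ u) ⬝ᵥ v) ^ 2 ≤ (u ⬝ᵥ u) * (v ⬝ᵥ v) := by
      calc ((Mᵀ *ᵥ u) ⬝ᵥ v) ^ 2
          ≤ ((Mᵀ *ᵥ u) ⬝ᵥ (Mᵀ *ᵥ u)) * (v ⬝ᵥ v) := dot_sq_le _ _
        _ ≤ (u ⬝ᵥ u) * (v ⬝ᵥ v) := mul_le_mul_of_nonneg_right (key u) hb
    have heq : (Mᵀ *ᵥ u) ⬝ᵥ v = u ⬝ᵥ u := by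
      rw [mulVec_transpose, ← dotProduct_mulVec, ← hu]
    rw [heq] at hcs
    nlinarith

private lemma vdv_collapse {V : Matrix m m ℝ} (hV2 : Vᵀ * V = 1) (a b : m → ℝ) :
    (V * diagonal a * Vᵀ) * (V * diagonal b * Vᵀ)
      = V * diagonal (fun i => a i * b i) * Vᵀ := by
  have h1 : Vᵀ * (V * (diagonal b * Vᵀ)) = diagonal b * Vᵀ := by
    rw [← Matrix.mul_assoc, hV2, Matrix.one_mul]
  simp only [Matrix.mul_assoc, h1]
  rw [← Matrix.mul_assoc (diagonal a), diagonal_mul_diagonal]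

private lemma conj_cancel {V : Matrix m m ℝ} (hV1 : V * Vᵀ = 1) (hV2 : Vᵀ * V = 1)
    (X : Matrix m m ℝ) : Vᵀ * (V * X * Vᵀ) * V = X := by
  have h1 : Vᵀ * (V * (X * Vᵀ)) = X * Vᵀ := by
    rw [← Matrix.mul_assoc, hV2, Matrix.one_mul]
  simp only [Matrix.mul_assoc, h1]
  rw [hV2, Matrix.mul_one]

private lemma vdv_transpose (V : Matrix m m ℝ) (a : m → ℝ) :
    (V * diagonal a * Vᵀ)ᵀ = V * diagonal a * Vᵀ := by
  rw [Matrix.transpose_mul, Matrix.transpose_mul, transpose_transpose,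
    diagonal_transpose, Matrix.mul_assoc]

private lemma orth_facts {V : Matrix m m ℝ} (hV : V ∈ Matrix.orthogonalGroup m ℝ) :
    V * Vᵀ = 1 ∧ Vᵀ * V = 1 := by
  constructor
  · have := (Matrix.mem_orthogonalGroup_iff m ℝ).mp hV
    exact this
  · have := (Matrix.mem_orthogonalGroup_iff' m ℝ).mp hV
    exact this

private lemma spectral0 {A : Matrix m m ℝ} (hH : A.IsHermitian) :
    ∃ (U : Matrix m m ℝ) (ν : m → ℝ), U ∈ Matrix.orthogonalGroup m ℝ ∧
      A = U * diagonal ν * Uᵀ := by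
  refine ⟨(hH.eigenvectorUnitary : Matrix m m ℝ), hH.eigenvalues,
    hH.eigenvectorUnitary.2, ?_⟩
  have := hH.spectral_theorem
  simpa [Matrix.star_eq_conjTranspose, star_triv, RCLike.ofReal_real_eq_id] using this

private lemma spectral {A : Matrix m m ℝ} (hA : A.PosSemidef) :
    ∃ (U : Matrix m m ℝ) (ν : m → ℝ), U ∈ Matrix.orthogonalGroup m ℝ ∧
      A = U * diagonal ν * Uᵀ ∧ (∀ i, 0 ≤ ν i) ∧
      ((1 - A).PosSemidef → ∀ i, ν i ≤ 1) := by
  obtain ⟨U, ν, hUmem, hspec⟩ := spectral0 hA.isHermitian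
  obtain ⟨hU1, hU2⟩ := orth_facts hUmem
  have hdiagpsd : (diagonal ν).PosSemidef := by
    have h := psd_conj hA Uᵀ
    rw [transpose_transpose] at h
    rwa [hspec, conj_cancel hU1 hU2] at h
  refine ⟨U, ν, hUmem, hspec, Matrix.posSemidef_diagonal_iff.mp hdiagpsd, ?_⟩
  intro h1A i
  have hdd : Uᵀ * (1 - A) * U = diagonal (fun i => 1 - ν i) := by
    rw [Matrix.mul_sub, Matrix.sub_mul, Matrix.mul_one, hU2, hspec,
      conj_cancel hU1 hU2, ← Matrix.diagonal_one, diagonal_sub]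
  have hpsd : (diagonal (fun i => 1 - ν i)).PosSemidef := by
    rw [← hdd]
    have h := psd_conj h1A Uᵀ
    rwa [transpose_transpose] at h
  have := Matrix.posSemidef_diagonal_iff.mp hpsd i
  linarith

private lemma psd_diag_entry {M : Matrix m m ℝ} (h : M.PosSemidef) (i : m) :
    0 ≤ M i i := by
  have h2 := psd_quad h (Pi.single i 1)
  simpa using h2

private lemma douglas {A B : Matrix m n ℝ} (h : (B * Bᵀ - A * Aᵀ).PosSemidef) :
    ∃ K : Matrix n n ℝ, A = B * K ∧ (1 - Kᵀ * K).PosSemidef := by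
  obtain ⟨V, δ, hVmem, hBBt, hδ0, -⟩ := spectral (psd_mt B)
  obtain ⟨hV1, hV2⟩ := orth_facts hVmem
  set dp : m → ℝ := fun i => if δ i = 0 then 0 else (δ i)⁻¹ with hdp
  set p : m → ℝ := fun i => if δ i = 0 then 0 else 1 with hp
  set r : m → ℝ := fun i => Real.sqrt (dp i) with hr
  have hdp0 : ∀ i, 0 ≤ dp i := by
    intro i
    by_cases hδ : δ i = 0 <;> simp [hdp, hδ, inv_nonneg.mpr (hδ0 i)]
  -- rows of Vᵀ * A vanish where δ vanishes
  have hpsd2 : (diagonal δ - (Vᵀ * A) * (Vᵀ * A)ᵀ).PosSemidef := by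
    have h2 := psd_conj h Vᵀ
    rw [transpose_transpose] at h2
    have e : Vᵀ * (B * Bᵀ - A * Aᵀ) * V = diagonal δ - (Vᵀ * A) * (Vᵀ * A)ᵀ := by
      rw [Matrix.mul_sub, Matrix.sub_mul, hBBt, conj_cancel hV1 hV2]
      congr 1
      simp only [Matrix.transpose_mul, transpose_transpose, Matrix.mul_assoc]
    rwa [e] at h2
  have hrow : ∀ i, δ i = 0 → ∀ j, (Vᵀ * A) i j = 0 := by
    intro i hi j
    have h3 := psd_diag_entry hpsd2 i
    have h4 : ((Vᵀ * A) * (Vᵀ * A)ᵀ) i i = ∑ k, (Vᵀ * A) i k ^ 2 := by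
      simp [Matrix.mul_apply, Matrix.transpose_apply, pow_two, mul_comm]
    have h5 : (diagonal δ - (Vᵀ * A) * (Vᵀ * A)ᵀ) i i
        = δ i - ((Vᵀ * A) * (Vᵀ * A)ᵀ) i i := by
      simp [Matrix.sub_apply]
    have h7 : ∀ k ∈ Finset.univ, (0:ℝ) ≤ (Vᵀ * A) i k ^ 2 := fun k _ => sq_nonneg _
    have h6 : ∑ k, (Vᵀ * A) i k ^ 2 ≤ 0 := by
      rw [h5, hi, h4] at h3; linarith
    have h8 := (Finset.sum_eq_zero_iff_of_nonneg h7).mp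
      (le_antisymm h6 (Finset.sum_nonneg h7)) j (Finset.mem_univ j)
    exact pow_eq_zero_iff (two_ne_zero) |>.mp h8
  refine ⟨Bᵀ * (V * diagonal dp * Vᵀ) * A, ?_, ?_⟩
  · -- A = B * K
    have e0 : (B * Bᵀ) * (V * diagonal dp * Vᵀ) = V * diagonal p * Vᵀ := by
      rw [hBBt]
      simp only [vdv_collapse hV2]
      have hfun : (fun i => δ i * dp i) = p := by
        funext i
        by_cases hδ : δ i = 0 <;> simp [hdp, hp, hδ, mul_inv_cancel₀]
      rw [hfun]
    have hpG : diagonal p * (Vᵀ * A) = Vᵀ * A := by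
      ext i j
      rw [Matrix.diagonal_mul]
      by_cases hδ : δ i = 0
      · rw [hrow i hδ j, mul_zero]
      · simp [hp, hδ]
    have e2 : V * diagonal p * Vᵀ * A = A := by
      rw [Matrix.mul_assoc (V * diagonal p), Matrix.mul_assoc V, hpG,
        ← Matrix.mul_assoc, hV1, Matrix.one_mul]
    have : B * (Bᵀ * (V * diagonal dp * Vᵀ) * A) = A := by
      calc B * (Bᵀ * (V * diagonal dp * Vᵀ) * A)
          = ((B * Bᵀ) * (V * diagonal dp * Vᵀ)) * A := by
            simp only [Matrix.mul_assoc]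
        _ = (V * diagonal p * Vᵀ) * A := by rw [e0]
        _ = A := e2
    exact this.symm
  · -- contraction
    have hWmid : (V * diagonal dp * Vᵀ) * (B * Bᵀ) * (V * diagonal dp * Vᵀ)
        = V * diagonal dp * Vᵀ := by
      rw [hBBt]
      simp only [vdv_collapse hV2]
      have hfun : (fun i => dp i * δ i * dp i) = dp := by
        funext i
        by_cases hδ : δ i = 0
        · simp [hdp, hδ]
        · simp only [hdp, hδ, if_false]
          rw [inv_mul_cancel₀ hδ, one_mul]
      rw [hfun]
    have c1 : (Bᵀ * (V * diagonal dp * Vᵀ) * A)ᵀ * (Bᵀ * (V * diagonal dp * Vᵀ) * A)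
        = Aᵀ * ((V * diagonal dp * Vᵀ) * (B * Bᵀ) * (V * diagonal dp * Vᵀ)) * A := by
      simp only [Matrix.transpose_mul, transpose_transpose, diagonal_transpose, Matrix.mul_assoc]
    rw [hWmid] at c1
    have hRR : (V * diagonal r * Vᵀ) * (V * diagonal r * Vᵀ) = V * diagonal dp * Vᵀ := by
      simp only [vdv_collapse hV2]
      have : (fun i => r i * r i) = dp := funext fun i => Real.mul_self_sqrt (hdp0 i)
      rw [this]
    have c2 : ((V * diagonal r * Vᵀ) * A)ᵀ * ((V * diagonal r * Vᵀ) * A)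
        = Aᵀ * ((V * diagonal r * Vᵀ) * (V * diagonal r * Vᵀ)) * A := by
      simp only [Matrix.transpose_mul, transpose_transpose, diagonal_transpose, Matrix.mul_assoc]
    rw [hRR] at c2
    rw [c1, ← c2]
    apply psd_flip
    have c3 : ((V * diagonal r * Vᵀ) * A) * ((V * diagonal r * Vᵀ) * A)ᵀ
        = (V * diagonal r * Vᵀ) * (A * Aᵀ) * (V * diagonal r * Vᵀ) := by
      simp only [Matrix.transpose_mul, transpose_transpose, diagonal_transpose, Matrix.mul_assoc]
    have c4 : (V * diagonal r * Vᵀ) * (B * Bᵀ) * (V * diagonal r * Vᵀ)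
        = V * diagonal p * Vᵀ := by
      rw [hBBt]
      simp only [vdv_collapse hV2]
      have hfun : (fun i => r i * δ i * r i) = p := by
        funext i
        by_cases hδ : δ i = 0
        · simp [hdp, hp, hr, hδ]
        · have h10 : r i * r i = (δ i)⁻¹ := by
            have h11 := Real.mul_self_sqrt (hdp0 i)
            simpa [hr, hdp, hδ] using h11
          have h12 : r i * δ i * r i = (δ i)⁻¹ * δ i := by
            rw [← h10]; ring
          simp only [hp, hδ, if_false]
          rw [h12, inv_mul_cancel₀ hδ]
      rw [hfun]
    have c5 : (1 : Matrix m m ℝ) - (V * diagonal r * Vᵀ) * (A * Aᵀ) * (V * diagonal r * Vᵀ)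
        = ((1 : Matrix m m ℝ) - V * diagonal p * Vᵀ)
          + (V * diagonal r * Vᵀ) * (B * Bᵀ - A * Aᵀ) * (V * diagonal r * Vᵀ) := by
      rw [Matrix.mul_sub, Matrix.sub_mul, c4]
      abel
    have c6 : ((1 : Matrix m m ℝ) - V * diagonal p * Vᵀ).PosSemidef := by
      have h9 : diagonal (fun i => (1:ℝ) - p i) = 1 - diagonal p := by
        ext i j
        by_cases hij : i = j
        · subst hij; simp [diagonal_apply_eq, Matrix.one_apply_eq]
        · simp [Matrix.diagonal_apply_ne _ hij, Matrix.one_apply_ne hij]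
      have e : (1 : Matrix m m ℝ) - V * diagonal p * Vᵀ
          = V * diagonal (fun i => (1:ℝ) - p i) * Vᵀ := by
        rw [h9, Matrix.mul_sub, Matrix.sub_mul, Matrix.mul_one, hV1]
      rw [e]
      refine psd_conj (Matrix.PosSemidef.diagonal ?_) V
      intro i
      by_cases hδ : δ i = 0 <;> simp [hp, hδ]
    have c7 := psd_conj h (V * diagonal r * Vᵀ)
    rw [vdv_transpose] at c7
    rw [c3, c5]
    exact c6.add c7

private lemma svd_contraction {K : Matrix n n ℝ} (hK : (1 - Kᵀ * K).PosSemidef) :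
    ∃ (W U : Matrix n n ℝ) (μ : n → ℝ), W ∈ Matrix.orthogonalGroup n ℝ ∧
      U ∈ Matrix.orthogonalGroup n ℝ ∧ (∀ i, 0 ≤ μ i ∧ μ i ≤ 1) ∧
      K = W * diagonal μ * Uᵀ := by
  obtain ⟨U, ν, hUmem, hKtK, hν0, hν1'⟩ := spectral (psd_tm K)
  have hν1 := hν1' hK
  obtain ⟨hU1, hU2⟩ := orth_facts hUmem
  set μ : n → ℝ := fun i => Real.sqrt (ν i) with hμ
  have hμ01 : ∀ i, 0 ≤ μ i ∧ μ i ≤ 1 := by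
    intro i
    refine ⟨Real.sqrt_nonneg _, ?_⟩
    simp only [hμ]
    calc Real.sqrt (ν i) ≤ Real.sqrt 1 := Real.sqrt_le_sqrt (hν1 i)
      _ = 1 := Real.sqrt_one
  have hGtG : (K * U)ᵀ * (K * U) = diagonal ν := by
    have e : (K * U)ᵀ * (K * U) = Uᵀ * (Kᵀ * K) * U := by
      simp only [Matrix.transpose_mul, Matrix.mul_assoc]
    rw [e, hKtK, conj_cancel hU1 hU2]
  have hcol : ∀ i k, ∑ j, (K * U) j i * (K * U) j k = if i = k then ν i else 0 := by
    intro i k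
    have e : ((K * U)ᵀ * (K * U)) i k = ∑ j, (K * U) j i * (K * U) j k := by
      simp [Matrix.mul_apply, Matrix.transpose_apply, mul_comm]
    rw [hGtG] at e
    rw [← e, Matrix.diagonal_apply]
  have hz : ∀ i, ν i = 0 → ∀ j, (K * U) j i = 0 := by
    intro i hi j
    have h6 : ∑ j, (K * U) j i * (K * U) j i = 0 := by
      rw [hcol i i, if_pos rfl, hi]
    have h7 : ∀ k ∈ Finset.univ, (0:ℝ) ≤ (K * U) k i * (K * U) k i :=
      fun k _ => mul_self_nonneg _
    have h8 := (Finset.sum_eq_zero_iff_of_nonneg h7).mp h6 j (Finset.mem_univ j)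
    exact mul_self_eq_zero.mp h8
  -- orthonormal family of normalized columns
  set v : n → EuclideanSpace ℝ n := fun i => (WithLp.equiv 2 _).symm
    (fun j => (μ i)⁻¹ * (K * U) j i) with hv
  have hvappl : ∀ i j, v i j = (μ i)⁻¹ * (K * U) j i := fun i j => rfl
  have hortho : Orthonormal ℝ (Set.restrict {i | ν i ≠ 0} v) := by
    rw [orthonormal_iff_ite]
    rintro ⟨i, hi⟩ ⟨k, hk⟩
    rw [PiLp.inner_apply]
    simp only [Set.restrict, Set.domRestrict_apply, RCLike.inner_apply, starRingEnd_apply, star_trivial, hvappl]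
    have e : ∀ j, (μ k)⁻¹ * (K * U) j k * ((μ i)⁻¹ * (K * U) j i)
        = ((μ i)⁻¹ * (μ k)⁻¹) * ((K * U) j i * (K * U) j k) := fun j => by ring
    simp only [e, ← Finset.mul_sum, hcol]
    by_cases hik : i = k
    · subst hik
      simp only [if_pos rfl]
      have hνpos : 0 < ν i := lt_of_le_of_ne (hν0 i) (Ne.symm hi)
      have : μ i * μ i = ν i := Real.mul_self_sqrt (hν0 i)
      have hμne : μ i ≠ 0 := by
        simp only [hμ]
        exact Real.sqrt_ne_zero'.mpr hνpos
      rw [← this]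
      field_simp
      simp
    · have : (⟨i, hi⟩ : {i | ν i ≠ 0}) ≠ ⟨k, hk⟩ := by simpa using hik
      simp [hik, this]
  obtain ⟨b, hb⟩ := hortho.exists_orthonormalBasis_extension_of_card_eq
    (finrank_euclideanSpace)
  set W : Matrix n n ℝ := Matrix.of (fun j i => b i j) with hW
  have hWmem : W ∈ Matrix.orthogonalGroup n ℝ := by
    rw [Matrix.mem_orthogonalGroup_iff']
    ext i k
    have e : (Wᵀ * W) i k = ∑ j, b i j * b k j := by
      simp [Matrix.mul_apply, Matrix.transpose_apply, hW]
    rw [e]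
    have := orthonormal_iff_ite.mp b.orthonormal i k
    rw [PiLp.inner_apply] at this
    simp only [RCLike.inner_apply, starRingEnd_apply, star_trivial] at this
    simp_rw [mul_comm ((b k).ofLp _)] at this
    rw [this, Matrix.one_apply]
  have hKU : K * U = W * diagonal μ := by
    ext j i
    rw [Matrix.mul_diagonal]
    by_cases hi : ν i = 0
    · have hμ0 : μ i = 0 := by simp only [hμ, hi, Real.sqrt_zero]
      rw [hz i hi j, hμ0, mul_zero]
    · have hbij : W j i = v i j := by
        rw [hW, Matrix.of_apply, hb i hi]
      rw [hbij, hvappl]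
      have hνpos : 0 < ν i := lt_of_le_of_ne (hν0 i) (Ne.symm hi)
      have hμne : μ i ≠ 0 := by
        simp only [hμ]
        exact Real.sqrt_ne_zero'.mpr hνpos
      rw [mul_comm ((μ i)⁻¹) _, mul_assoc, inv_mul_cancel₀ hμne, mul_one]
  refine ⟨W, U, μ, hWmem, hUmem, hμ01, ?_⟩
  calc K = K * (U * Uᵀ) := by rw [hU1, Matrix.mul_one]
    _ = (K * U) * Uᵀ := by rw [Matrix.mul_assoc]
    _ = W * diagonal μ * Uᵀ := by rw [hKU]

end MatrixAux

theorem T_monotone_matrix_preorder (d q : ℕ)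
    (Ω : Type*) [MeasurableSpace Ω] (P : Measure Ω) [IsProbabilityMeasure P]
    (Z : Ω → (Fin q → ℝ)) (hZmeas : Measurable Z) (hZint : Integrable Z P)
    (hradial : ∀ O ∈ Matrix.orthogonalGroup (Fin q) ℝ,
      Measure.map (fun ω => (O : Matrix (Fin q) (Fin q) ℝ).mulVec (Z ω)) P
        = Measure.map Z P)
    (f : (Fin d → ℝ) → ℝ) (hf : ConvexOn ℝ Set.univ f)
    (C : ℝ) (hgrowth : ∀ x, |f x| ≤ C * (1 + ‖x‖)) :
    ∀ (x : Fin d → ℝ) (A B : Matrix (Fin d) (Fin q) ℝ),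
      (B * Bᵀ - A * Aᵀ).PosSemidef →
      ∫ ω, f (x + A.mulVec (Z ω)) ∂P ≤ ∫ ω, f (x + B.mulVec (Z ω)) ∂P := by
  intro x A B hpsd
  have hC0 : 0 ≤ C := by
    have := hgrowth 0
    have h0 := abs_nonneg (f 0)
    nlinarith [norm_nonneg (0 : Fin d → ℝ)]
  have hfc : Continuous f := by
    rw [← continuousOn_univ]
    exact hf.continuousOn isOpen_univ
  -- integrability
  have hint : ∀ M : Matrix (Fin d) (Fin q) ℝ,
      Integrable (fun ω => f (x + M.mulVec (Z ω))) P := by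
    intro M
    set T : (Fin q → ℝ) →L[ℝ] (Fin d → ℝ) :=
      LinearMap.toContinuousLinearMap (Matrix.mulVecLin M) with hT
    have hTapp : ∀ v, M.mulVec v = T v := fun v => rfl
    have hcont : Continuous fun v : Fin q → ℝ => f (x + M.mulVec v) := by
      apply hfc.comp
      exact continuous_const.add T.continuous
    have hmeas : AEStronglyMeasurable (fun ω => f (x + M.mulVec (Z ω))) P :=
      ((hcont.measurable).comp hZmeas).aestronglyMeasurable
    refine Integrable.mono' (g := fun ω => C * (1 + ‖x‖) + C * ‖T‖ * ‖Z ω‖)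
      ?_ hmeas ?_
    · exact (integrable_const _).add (hZint.norm.const_mul _)
    · filter_upwards with ω
      have h1 : ‖x + M.mulVec (Z ω)‖ ≤ ‖x‖ + ‖T‖ * ‖Z ω‖ := by
        refine (norm_add_le _ _).trans ?_
        gcongr
        rw [hTapp]
        exact T.le_opNorm _
      have h2 := hgrowth (x + M.mulVec (Z ω))
      have h3 : ‖T‖ * ‖Z ω‖ ≥ 0 := mul_nonneg (norm_nonneg _) (norm_nonneg _)
      rw [Real.norm_eq_abs]
      nlinarith
  -- change of variables by an orthogonal matrix
  have hmap : ∀ (M : Matrix (Fin d) (Fin q) ℝ) (O : Matrix (Fin q) (Fin q) ℝ),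
      O ∈ Matrix.orthogonalGroup (Fin q) ℝ →
      ∫ ω, f (x + M.mulVec (O.mulVec (Z ω))) ∂P = ∫ ω, f (x + M.mulVec (Z ω)) ∂P := by
    intro M O hO
    have hg : Continuous fun v : Fin q → ℝ => f (x + M.mulVec v) := by
      apply hfc.comp
      exact continuous_const.add
        (LinearMap.toContinuousLinearMap (Matrix.mulVecLin M)).continuous
    have h1 : Measurable fun ω => O.mulVec (Z ω) := by
      exact ((LinearMap.toContinuousLinearMap
        (Matrix.mulVecLin O)).continuous.measurable).comp hZmeas
    calc ∫ ω, f (x + M.mulVec (O.mulVec (Z ω))) ∂P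
        = ∫ v, f (x + M.mulVec v) ∂(Measure.map (fun ω => O.mulVec (Z ω)) P) :=
          (integral_map h1.aemeasurable hg.aestronglyMeasurable).symm
      _ = ∫ v, f (x + M.mulVec v) ∂(Measure.map Z P) := by rw [hradial O hO]
      _ = ∫ ω, f (x + M.mulVec (Z ω)) ∂P :=
          integral_map hZmeas.aemeasurable hg.aestronglyMeasurable
  -- one-step inequality for a convex combination of 1 and an orthogonal matrix
  have hstep : ∀ (M : Matrix (Fin d) (Fin q) ℝ) (O : Matrix (Fin q) (Fin q) ℝ),
      O ∈ Matrix.orthogonalGroup (Fin q) ℝ → ∀ t : ℝ, 0 ≤ t → t ≤ 1 →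
      ∫ ω, f (x + (M * (t • (1 : Matrix (Fin q) (Fin q) ℝ) + (1 - t) • O)).mulVec (Z ω)) ∂P
        ≤ ∫ ω, f (x + M.mulVec (Z ω)) ∂P := by
    intro M O hO t ht0 ht1
    have h2 : Integrable (fun ω => f (x + M.mulVec (O.mulVec (Z ω)))) P := by
      have := hint (M * O)
      simpa only [← Matrix.mulVec_mulVec] using this
    have key : ∀ ω, f (x + (M * (t • (1 : Matrix (Fin q) (Fin q) ℝ) + (1 - t) • O)).mulVec (Z ω))
        ≤ t * f (x + M.mulVec (Z ω)) + (1 - t) * f (x + M.mulVec (O.mulVec (Z ω))) := by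
      intro ω
      have e : x + (M * (t • (1 : Matrix (Fin q) (Fin q) ℝ) + (1 - t) • O)).mulVec (Z ω)
          = t • (x + M.mulVec (Z ω)) + (1 - t) • (x + M.mulVec (O.mulVec (Z ω))) := by
        rw [Matrix.mul_add, Matrix.mul_smul, Matrix.mul_smul, Matrix.mul_one,
          Matrix.add_mulVec, Matrix.smul_mulVec, Matrix.smul_mulVec,
          Matrix.mulVec_mulVec]
        rw [smul_add, smul_add]
        have hx : t • x + (1 - t) • x = x := by
          rw [← add_smul]
          norm_num
        rw [add_add_add_comm, hx]
      rw [e]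
      have hcvx : f (t • (x + M.mulVec (Z ω)) + (1 - t) • (x + M.mulVec (O.mulVec (Z ω))))
          ≤ t * f (x + M.mulVec (Z ω)) + (1 - t) * f (x + M.mulVec (O.mulVec (Z ω))) :=
        hf.2 (Set.mem_univ _) (Set.mem_univ _) ht0 (by linarith) (by ring)
      exact hcvx
    calc ∫ ω, f (x + (M * (t • (1 : Matrix (Fin q) (Fin q) ℝ) + (1 - t) • O)).mulVec (Z ω)) ∂P
        ≤ ∫ ω, (t * f (x + M.mulVec (Z ω))
            + (1 - t) * f (x + M.mulVec (O.mulVec (Z ω)))) ∂P := by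
          refine integral_mono (hint _) ?_ key
          exact ((hint M).const_mul t).add (h2.const_mul (1 - t))
      _ = t * ∫ ω, f (x + M.mulVec (Z ω)) ∂P
            + (1 - t) * ∫ ω, f (x + M.mulVec (O.mulVec (Z ω))) ∂P := by
          rw [integral_add ((hint M).const_mul t) (h2.const_mul (1 - t)),
            integral_const_mul, integral_const_mul]
      _ = ∫ ω, f (x + M.mulVec (Z ω)) ∂P := by
          rw [hmap M O hO]
          ring
  -- multiplication by a diagonal contraction
  have hdiag : ∀ (μ : Fin q → ℝ), (∀ i, 0 ≤ μ i ∧ μ i ≤ 1) →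
      ∀ M : Matrix (Fin d) (Fin q) ℝ,
      ∫ ω, f (x + (M * diagonal μ).mulVec (Z ω)) ∂P ≤ ∫ ω, f (x + M.mulVec (Z ω)) ∂P := by
    intro μ hμ M
    suffices h : ∀ s : Finset (Fin q),
        ∫ ω, f (x + (M * diagonal (fun i => if i ∈ s then μ i else 1)).mulVec (Z ω)) ∂P
          ≤ ∫ ω, f (x + M.mulVec (Z ω)) ∂P by
      have := h Finset.univ
      simpa using this
    intro s
    induction s using Finset.induction_on with
    | empty => simp
    | @insert a s ha ih =>
      have hsplit : (fun i => if i ∈ insert a s then μ i else 1)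
          = fun i => (if i ∈ s then μ i else 1) * (if i = a then μ a else 1) := by
        funext i
        by_cases h1 : i = a
        · subst h1
          simp [ha]
        · by_cases h2 : i ∈ s <;> simp [h1, h2]
      set t : ℝ := (1 + μ a) / 2 with htdef
      have ht0 : 0 ≤ t := by
        have := (hμ a).1
        rw [htdef]; linarith
      have ht1 : t ≤ 1 := by
        have := (hμ a).2
        rw [htdef]; linarith
      set S : Matrix (Fin q) (Fin q) ℝ :=
        diagonal (fun i => if i = a then (-1 : ℝ) else 1) with hS
      have hSmem : S ∈ Matrix.orthogonalGroup (Fin q) ℝ := by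
        rw [Matrix.mem_orthogonalGroup_iff]
        rw [hS, diagonal_transpose,
          diagonal_mul_diagonal]
        have : (fun i => (if i = a then (-1:ℝ) else 1) * (if i = a then (-1:ℝ) else 1))
            = fun _ => (1:ℝ) := by
          funext i
          by_cases h1 : i = a <;> simp [h1]
        rw [this, diagonal_one]
      have hconv : diagonal (fun i => if i = a then μ a else 1)
          = t • (1 : Matrix (Fin q) (Fin q) ℝ) + (1 - t) • S := by
        ext i j
        rw [hS]
        by_cases hij : i = j
        · subst hij
          by_cases h1 : i = a
          · subst h1
            simp [Matrix.diagonal_apply_eq, Matrix.one_apply_eq, htdef]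
            ring
          · simp [Matrix.diagonal_apply_eq, Matrix.one_apply_eq, h1, htdef]
        · simp [Matrix.diagonal_apply_ne _ hij, Matrix.one_apply_ne hij]
      calc ∫ ω, f (x + (M * diagonal (fun i => if i ∈ insert a s then μ i else 1)).mulVec (Z ω)) ∂P
          = ∫ ω, f (x + ((M * diagonal (fun i => if i ∈ s then μ i else 1))
              * (t • (1 : Matrix (Fin q) (Fin q) ℝ) + (1 - t) • S)).mulVec (Z ω)) ∂P := by
            rw [hsplit]
            rw [← hconv, Matrix.mul_assoc, diagonal_mul_diagonal]
        _ ≤ ∫ ω, f (x + (M * diagonal (fun i => if i ∈ s then μ i else 1)).mulVec (Z ω)) ∂P :=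
            hstep _ S hSmem t ht0 ht1
        _ ≤ ∫ ω, f (x + M.mulVec (Z ω)) ∂P := ih
  -- assembly
  obtain ⟨K, hAK, hKc⟩ := douglas hpsd
  obtain ⟨W, U, μ, hWmem, hUmem, hμ01, hKdec⟩ := svd_contraction hKc
  have hUt : Uᵀ ∈ Matrix.orthogonalGroup (Fin q) ℝ := by
    rw [Matrix.mem_orthogonalGroup_iff]
    rw [transpose_transpose]
    exact ((Matrix.mem_orthogonalGroup_iff' (Fin q) ℝ).mp hUmem).trans rfl |>.symm ▸ rfl
  calc ∫ ω, f (x + A.mulVec (Z ω)) ∂P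
      = ∫ ω, f (x + ((B * W * diagonal μ) * Uᵀ).mulVec (Z ω)) ∂P := by
        rw [hAK, hKdec]
        simp only [← Matrix.mul_assoc]
    _ = ∫ ω, f (x + (B * W * diagonal μ).mulVec (Uᵀ.mulVec (Z ω))) ∂P := by
        simp only [Matrix.mulVec_mulVec]
    _ = ∫ ω, f (x + (B * W * diagonal μ).mulVec (Z ω)) ∂P := hmap _ Uᵀ hUt
    _ ≤ ∫ ω, f (x + (B * W).mulVec (Z ω)) ∂P := hdiag μ hμ01 (B * W)
    _ = ∫ ω, f (x + B.mulVec (W.mulVec (Z ω))) ∂P := by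
        simp only [Matrix.mulVec_mulVec]
    _ = ∫ ω, f (x + B.mulVec (Z ω)) ∂P := hmap B W hWmem
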